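/- Let n ≥ 1, let W be a tuple of n pairwise distinct complex numbers, U a tuple of n−1 complex numbers, and u a further complex number, all generic so that every denominator below is nonzero. Then the sum over all partitions of W into a single element w_ρ and the complementary subset W' satisfies: Σ g(w_ρ, W')·g(u, w_ρ)/h(W', U) = h(u, U)·g(u, W)/h(W, U). -/

import Mathlib

open scoped BigOperators Polynomial

/-- The rational function `g(x,y) = c/(x-y)`. -/
noncomputable def gG (c x y : ℂ) : ℂ := c / (x - y)

/-- The rational function `f(x,y) = (x-y+c)/(x-y)`. -/
noncomputable def fF (c x y : ℂ) : ℂ := (x - y + c) / (x - y)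

/-- The rational function `h(x,y) = (x-y+c)/c`. -/
noncomputable def hH (c x y : ℂ) : ℂ := (x - y + c) / c

/-- A two-argument function applied to tuples denotes the product over all elements. -/
noncomputable def pF (F : ℂ → ℂ → ℂ) (U V : List ℂ) : ℂ :=
  (U.map fun x => (V.map fun y => F x y).prod).prod

/-- The domain-wall partition function `K(ū|v̄) = Δ'(ū)·Δ(v̄)·h(ū,v̄)·det(g(u_j,v_k)/h(u_j,v_k))`,
written in the equivalent (rational-continuation) form in which the prefactor `h(ū,v̄)` is
distributed over the rows of the determinant:
`K(ū|v̄) = Δ'(ū)·Δ(v̄)·det( g(u_j,v_k)·∏_{k'≠k} h(u_j,v_{k'}) )`.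
For tuples of equal length `n` with all denominators nonzero this coincides with the literal
formula, and `K(∅|∅) = 1`. -/
noncomputable def Kd (c : ℂ) (U V : List ℂ) : ℂ :=
  (∏ j : Fin U.length, ∏ k : Fin U.length,
      if (j : ℕ) < (k : ℕ) then gG c (U.get j) (U.get k) else 1) *
  (∏ j : Fin V.length, ∏ k : Fin V.length,
      if (k : ℕ) < (j : ℕ) then gG c (V.get j) (V.get k) else 1) *
  Matrix.det (Matrix.of fun j k : Fin U.length =>
    gG c (U.get j) (V.getD (k : ℕ) 0) *
      ∏ k' : Fin U.length, if k' = k then 1 else hH c (U.get j) (V.getD (k' : ℕ) 0))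

/-- The sub-tuple of a tuple `L` selected by a set `A` of positions (in increasing order). -/
noncomputable def subL (L : List ℂ) (A : Finset (Fin L.length)) : List ℂ :=
  (A.sort (· ≤ ·)).map L.get

/-- Genericity of a family of parameters: all members are pairwise distinct and no difference
of two members equals `±c`, so that every denominator occurring (also after shifts by `±c`)
is nonzero. -/
def Generic (c : ℂ) (L : List ℂ) : Prop :=
  L.Pairwise fun x y => x ≠ y ∧ x - y ≠ c ∧ x - y ≠ -c

lemma prod_map_eq_prod_fin (f : ℂ → ℂ) (L : List ℂ) :
    (L.map f).prod = ∏ i : Fin L.length, f (L.get i) := by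
  conv_lhs => rw [← List.ofFn_get L]
  rw [List.map_ofFn, List.prod_ofFn]
  rfl

lemma prod_subL (L : List ℂ) (A : Finset (Fin L.length)) (f : ℂ → ℂ) :
    ((subL L A).map f).prod = ∏ j ∈ A, f (L.get j) := by
  rw [subL, List.map_map, ← Finset.prod_map_toList]
  exact ((Finset.sort_perm_toList (s := A) (r := (· ≤ ·))).map _).prod_eq

lemma scalar_id (c cm a q p De d : ℂ) (hc : c ≠ 0) (hcm : cm ≠ 0) (ha : a ≠ 0)
    (hq : q ≠ 0) (hp : p ≠ 0) (hDe : De ≠ 0) (hd : d ≠ 0) :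
    cm / a * (c / d) / De = c * (p * (a⁻¹ * q)) / (d * q) / (p * cm⁻¹ * De) := by
  field_simp

lemma lagrange_key (N : ℕ) (w : Fin N → ℂ) (hinj : Function.Injective w)
    (P : ℂ[X]) (hPdeg : P.degree < (Finset.univ : Finset (Fin N)).card) (u : ℂ) :
    ∑ k : Fin N, P.eval (w k) * ∏ j ∈ Finset.univ.erase k, ((w k - w j)⁻¹ * (u - w j))
      = P.eval u := by
  have h2 := Lagrange.eq_interpolate (s := Finset.univ) (v := w) hinj.injOn hPdeg
  conv_rhs => rw [h2]
  rw [Lagrange.interpolate_apply, Polynomial.eval_finset_sum]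
  refine Finset.sum_congr rfl fun k _ => ?_
  rw [Polynomial.eval_mul, Polynomial.eval_C, Lagrange.basis, Polynomial.eval_prod]
  congr 1
  refine Finset.prod_congr rfl fun j _ => ?_
  simp [Lagrange.basisDivisor]

/-- eq. (3.16), Cauchy-determinant summation with shifted arguments:
`Σ g(w_ρ,W')·g(u,w_ρ)/h(W',U) = h(u,U)·g(u,W)/h(W,U)`,
the sum running over all partitions of `W` into a single element `w_ρ = W_k` and the
complementary subset `W'`. -/
theorem stmt9 (c : ℂ) (hc : c ≠ 0) (n : ℕ) (hn : 1 ≤ n) (W U : List ℂ)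
    (hW : W.length = n) (hU : U.length = n - 1) (u : ℂ)
    (hgen : Generic c (W ++ U ++ [u])) :
    ∑ k : Fin W.length,
      pF (gG c) [W.get k] (subL W (Finset.univ.erase k)) * gG c u (W.get k) /
        pF (hH c) (subL W (Finset.univ.erase k)) U
      = pF (hH c) [u] U * pF (gG c) [u] W / pF (hH c) W U := by
  classical
  have hlen : U.length + 1 = W.length := by omega
  rw [Generic, List.pairwise_append, List.pairwise_append] at hgen
  obtain ⟨⟨hWW, hUU, hWUmem⟩, -, hWul⟩ := hgen
  have hinj : Function.Injective W.get := by
    apply List.nodup_iff_injective_get.mp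
    exact hWW.imp (fun h => h.1)
  have huW : ∀ k : Fin W.length, u - W.get k ≠ 0 := by
    intro k
    refine sub_ne_zero.mpr (Ne.symm ?_)
    exact (hWul (W.get k) (by simp [List.get_mem]) u (by simp)).1
  have hWUc : ∀ (k : Fin W.length) (i : Fin U.length), W.get k - U.get i + c ≠ 0 := by
    intro k i h
    have h2 := (hWUmem (W.get k) (List.get_mem _ _) (U.get i) (List.get_mem _ _)).2.2
    exact h2 (by linear_combination h)
  -- the polynomial
  set M := U.length with hM
  obtain ⟨P, hP⟩ : ∃ P : ℂ[X], P = ∏ i : Fin M, (Polynomial.X - Polynomial.C (U.get i - c)) :=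
    ⟨_, rfl⟩
  have hPeval : ∀ x : ℂ, P.eval x = ∏ i : Fin M, (x - U.get i + c) := by
    intro x
    rw [hP, Polynomial.eval_prod]
    exact Finset.prod_congr rfl fun i _ => by simp; ring
  have hPdeg : P.degree < (Finset.univ : Finset (Fin W.length)).card := by
    have hd : P.degree = (M : WithBot ℕ) := by
      rw [hP, Polynomial.degree_prod,
        Finset.sum_congr rfl (fun i _ => Polynomial.degree_X_sub_C (U.get i - c))]
      simp
      exact hM.symm
    rw [hd, Finset.card_univ, Fintype.card_fin]
    exact_mod_cast (by omega : M < W.length)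
  have key : ∑ k : Fin W.length, P.eval (W.get k) *
      ((∏ j ∈ Finset.univ.erase k, (W.get k - W.get j))⁻¹ *
        ∏ j ∈ Finset.univ.erase k, (u - W.get j)) = P.eval u := by
    rw [← lagrange_key W.length W.get hinj P hPdeg u]
    exact Finset.sum_congr rfl fun k _ => by
      rw [Finset.prod_mul_distrib, Finset.prod_inv_distrib]
  have hD : ∀ j : Fin W.length, P.eval (W.get j) ≠ 0 := by
    intro j
    rw [hPeval]
    exact Finset.prod_ne_zero_iff.mpr fun i _ => hWUc j i
  have hQe : ∀ k : Fin W.length, (∏ j ∈ Finset.univ.erase k, (u - W.get j)) ≠ 0 :=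
    fun k => Finset.prod_ne_zero_iff.mpr fun j _ => huW j
  have hA : ∀ k : Fin W.length, (∏ j ∈ Finset.univ.erase k, (W.get k - W.get j)) ≠ 0 := by
    intro k
    refine Finset.prod_ne_zero_iff.mpr fun j hj => sub_ne_zero.mpr fun h => ?_
    exact (Finset.mem_erase.mp hj).1 (hinj h).symm
  have hcard : ∀ k : Fin W.length, (Finset.univ.erase k).card = M := by
    intro k
    rw [Finset.card_erase_of_mem (Finset.mem_univ k), Finset.card_univ, Fintype.card_fin]
    omega
  have hcM : (c : ℂ) ^ M ≠ 0 := pow_ne_zero _ hc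
  -- inner h-products
  have hHU : ∀ x : ℂ, ((U.map fun y => hH c x y).prod) = P.eval x * (c ^ M)⁻¹ := by
    intro x
    rw [prod_map_eq_prod_fin, hPeval]
    simp only [hH]
    rw [Finset.prod_div_distrib, Finset.prod_const, Finset.card_univ, Fintype.card_fin,
      div_eq_mul_inv]
  obtain ⟨Q, hQdef⟩ : ∃ q : ℂ, q = ∏ j : Fin W.length, (u - W.get j) := ⟨_, rfl⟩
  obtain ⟨Dall, hDall⟩ : ∃ d : ℂ, d = ∏ j : Fin W.length, (P.eval (W.get j) * (c ^ M)⁻¹) :=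
    ⟨_, rfl⟩
  -- rewrite LHS termwise
  have hterm : ∀ k : Fin W.length,
      pF (gG c) [W.get k] (subL W (Finset.univ.erase k)) * gG c u (W.get k) /
        pF (hH c) (subL W (Finset.univ.erase k)) U
      = c * (P.eval (W.get k) *
          ((∏ j ∈ Finset.univ.erase k, (W.get k - W.get j))⁻¹ *
            ∏ j ∈ Finset.univ.erase k, (u - W.get j))) / Q / Dall := by
    intro k
    have h1 : pF (gG c) [W.get k] (subL W (Finset.univ.erase k))
        = c ^ M / ∏ j ∈ Finset.univ.erase k, (W.get k - W.get j) := by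
      simp only [pF, List.map_cons, List.map_nil, List.prod_cons, List.prod_nil, mul_one]
      rw [prod_subL]
      simp only [gG]
      rw [Finset.prod_div_distrib, Finset.prod_const, hcard k]
    have h2 : pF (hH c) (subL W (Finset.univ.erase k)) U
        = ∏ j ∈ Finset.univ.erase k, (P.eval (W.get j) * (c ^ M)⁻¹) := by
      rw [pF, prod_subL W (Finset.univ.erase k) (fun x => (U.map fun y => hH c x y).prod)]
      exact Finset.prod_congr rfl fun j _ => hHU (W.get j)
    have h3 : Q = (u - W.get k) * ∏ j ∈ Finset.univ.erase k, (u - W.get j) := by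
      rw [hQdef]; exact (Finset.mul_prod_erase _ _ (Finset.mem_univ k)).symm
    have h4 : Dall = (P.eval (W.get k) * (c ^ M)⁻¹) *
        ∏ j ∈ Finset.univ.erase k, (P.eval (W.get j) * (c ^ M)⁻¹) := by
      rw [hDall]; exact (Finset.mul_prod_erase _ _ (Finset.mem_univ k)).symm
    rw [h1, h2, h3, h4]
    simp only [gG]
    exact scalar_id c (c ^ M) _ _ _ _ _ hc hcM (hA k) (hQe k) (hD k)
      (Finset.prod_ne_zero_iff.mpr fun j _ => mul_ne_zero (hD j) (inv_ne_zero hcM)) (huW k)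
  rw [Finset.sum_congr rfl fun k _ => hterm k]
  rw [← Finset.sum_div, ← Finset.sum_div, ← Finset.mul_sum, key]
  -- RHS
  have r1 : pF (hH c) [u] U = P.eval u * (c ^ M)⁻¹ := by
    simp only [pF, List.map_cons, List.map_nil, List.prod_cons, List.prod_nil, mul_one]
    exact hHU u
  have r2 : pF (gG c) [u] W = c ^ W.length / Q := by
    simp only [pF, List.map_cons, List.map_nil, List.prod_cons, List.prod_nil, mul_one]
    rw [prod_map_eq_prod_fin]
    simp only [gG]
    rw [Finset.prod_div_distrib, Finset.prod_const, Finset.card_univ, Fintype.card_fin, ← hQdef]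
  have r3 : pF (hH c) W U = Dall := by
    rw [pF, prod_map_eq_prod_fin (fun x => (U.map fun y => hH c x y).prod) W, hDall]
    exact Finset.prod_congr rfl fun j _ => hHU (W.get j)
  rw [r1, r2, r3]
  congr 1
  rw [← hlen, pow_succ, ← mul_div_assoc]
  congr 1
  field_simp
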